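/- Crystallographic restriction: if a discrete subgroup G of isometries of ℝ² contains two linearly independent translations and a rotation of order n, then n ∈ {1, 2, 3, 4, 6}. -/

import Mathlib

open Complex

/-- **Crystallographic restriction.** Let `G` be a group of isometries of the plane
(identified with `ℂ`) whose subgroup of translations is exactly the lattice generated by
two `ℝ`-linearly independent vectors `v, w` (this encodes discreteness of the translation
subgroup).  If `G` contains the rotation by angle `2π/n` (with `n ≥ 1`) about some point
`c`, then `n ∈ {1, 2, 3, 4, 6}`. -/
theorem crystallographic_restriction (G : Subgroup (ℂ ≃ᵢ ℂ)) (v w : ℂ)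
    (hindep : LinearIndependent ℝ ![v, w])
    (hlattice : ∀ t : ℂ, (∃ g ∈ G, ∀ z : ℂ, g z = z + t) ↔
      ∃ m k : ℤ, t = (m : ℂ) * v + (k : ℂ) * w)
    (n : ℕ) (hn : 1 ≤ n) (c : ℂ)
    (hrot : ∃ g ∈ G, ∀ z : ℂ, g z = c + Complex.exp (2 * Real.pi * I / n) * (z - c)) :
    n ∈ ({1, 2, 3, 4, 6} : Set ℕ) := by
  obtain ⟨g, hgG, hg⟩ := hrot
  set ζ : ℂ := Complex.exp (2 * Real.pi * I / n) with hζdef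
  have key : ∀ t : ℂ, (∃ m k : ℤ, t = (m:ℂ)*v + (k:ℂ)*w) →
      ∃ m k : ℤ, ζ * t = (m:ℂ)*v + (k:ℂ)*w := by
    intro t ht
    obtain ⟨gt, hgtG, hgt⟩ := (hlattice t).mpr ht
    refine (hlattice (ζ * t)).mp ⟨g * gt * g⁻¹, mul_mem (mul_mem hgG hgtG) (inv_mem hgG), ?_⟩
    intro z
    have h1 : (g * gt * g⁻¹) z = g (gt (g⁻¹ z)) := rfl
    have h2 : g (g⁻¹ z) = z := by
      show g (g.symm z) = z
      exact g.apply_symm_apply z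
    rw [h1, hgt, hg]
    calc c + ζ * (g⁻¹ z + t - c) = (c + ζ * (g⁻¹ z - c)) + ζ * t := by ring
      _ = g (g⁻¹ z) + ζ * t := by rw [hg]
      _ = z + ζ * t := by rw [h2]
  obtain ⟨a, b, hab⟩ := key v ⟨1, 0, by push_cast; ring⟩
  obtain ⟨c', d, hcd⟩ := key w ⟨0, 1, by push_cast; ring⟩
  have hv0 : v ≠ 0 := by
    have := hindep.ne_zero 0
    simpa using this
  have hquad : ζ^2 - ((a:ℂ) + d) * ζ + ((a:ℂ)*d - b*c') = 0 := by
    have h : (ζ^2 - ((a:ℂ) + d) * ζ + ((a:ℂ)*d - b*c')) * v = 0 := by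
      linear_combination (ζ - (d:ℂ)) * hab + (b:ℂ) * hcd
    rcases mul_eq_zero.mp h with h' | h'
    · exact h'
    · exact absurd h' hv0
  -- write ζ in terms of θ = 2π/n
  have hn0 : (n:ℝ) ≠ 0 := by positivity
  set θ : ℝ := 2 * Real.pi / n with hθdef
  have harg : (2 * (Real.pi:ℂ) * I / n) = (θ:ℂ) * I := by
    rw [hθdef]; push_cast; ring
  have hζ2 : ζ = (Real.cos θ : ℂ) + (Real.sin θ : ℂ) * I := by
    rw [hζdef, harg, Complex.exp_mul_I, ← Complex.ofReal_cos, ← Complex.ofReal_sin]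
  rw [hζ2] at hquad
  have him : Real.sin θ * (2 * Real.cos θ - ((a:ℝ) + d)) = 0 := by
    have h2 := congrArg Complex.im hquad
    simp only [Complex.add_im, Complex.sub_im, Complex.mul_im, Complex.mul_re,
      Complex.add_re, Complex.sub_re, Complex.ofReal_re, Complex.ofReal_im,
      Complex.I_re, Complex.I_im, Complex.intCast_re, Complex.intCast_im, sq,
      Complex.zero_im] at h2
    linarith [h2]
  have hθpos : 0 < θ := by
    have : (0:ℝ) < n := by positivity
    rw [hθdef]; positivity
  rcases mul_eq_zero.mp him with hsin | hcos
  · -- sin θ = 0 : n ≤ 2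
    obtain ⟨k, hk⟩ := Real.sin_eq_zero_iff.mp hsin
    have hk2 : (k : ℝ) * n = 2 := by
      rw [hθdef] at hk
      field_simp at hk
      have hpi := Real.pi_pos
      nlinarith
    have hdvd : (n:ℤ) ∣ 2 := Dvd.intro_left k (by exact_mod_cast hk2)
    have hle : (n:ℤ) ≤ 2 := Int.le_of_dvd (by norm_num) hdvd
    have : n ≤ 2 := by exact_mod_cast hle
    interval_cases n <;> simp
  · -- 2 cos θ = a + d
    have hcos' : 2 * Real.cos θ = ((a + d : ℤ) : ℝ) := by push_cast; linarith
    set s : ℤ := a + d with hs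
    have hb1 : -2 ≤ s := by
      have := Real.neg_one_le_cos θ
      have : (-2:ℝ) ≤ (s:ℝ) := by linarith
      exact_mod_cast this
    have hb2 : s ≤ 2 := by
      have := Real.cos_le_one θ
      have : (s:ℝ) ≤ 2 := by linarith
      exact_mod_cast this
    rcases eq_or_lt_of_le hn with h1 | hn2
    · left; omega
    have hn2' : (2:ℝ) ≤ n := by exact_mod_cast hn2
    have hθle : θ ≤ Real.pi := by
      rw [hθdef, div_le_iff₀ (by positivity)]
      nlinarith [Real.pi_pos]
    have hmem : θ ∈ Set.Icc 0 Real.pi := ⟨le_of_lt hθpos, hθle⟩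
    have solve : ∀ m : ℕ, 0 < m → θ = 2 * Real.pi / m → n = m := by
      intro m hm hθm
      have hm0 : (m:ℝ) ≠ 0 := by positivity
      have hr : 2 * Real.pi / (n:ℝ) = 2 * Real.pi / m := by rw [← hθdef, hθm]
      field_simp at hr
      exact_mod_cast hr.symm
    interval_cases s
    · -- cos θ = -1 = cos π, θ = π = 2π/2
      have : θ = Real.pi := by
        refine Real.injOn_cos hmem ⟨le_refl 0 |>.trans Real.pi_pos.le, le_refl _⟩ ?_
        rw [Real.cos_pi]; push_cast at hcos'; linarith
      have := solve 2 (by norm_num) (by rw [this]; ring)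
      right; left; exact this
    · -- cos θ = -1/2 = cos (2π/3)
      have hc : Real.cos (2*Real.pi/3) = -(1/2) := by
        rw [show (2*Real.pi/3) = Real.pi - Real.pi/3 by ring, Real.cos_pi_sub,
          Real.cos_pi_div_three]
      have : θ = 2*Real.pi/3 := by
        refine Real.injOn_cos hmem ⟨by positivity, by nlinarith [Real.pi_pos]⟩ ?_
        rw [hc]; push_cast at hcos'; linarith
      have := solve 3 (by norm_num) (by rw [this]; push_cast; ring)
      right; right; left; exact this
    · -- cos θ = 0 = cos (π/2)
      have : θ = Real.pi/2 := by
        refine Real.injOn_cos hmem ⟨by positivity, by nlinarith [Real.pi_pos]⟩ ?_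
        rw [Real.cos_pi_div_two]; push_cast at hcos'; linarith
      have := solve 4 (by norm_num) (by rw [this]; push_cast; ring)
      right; right; right; left; exact this
    · -- cos θ = 1/2 = cos (π/3)
      have : θ = Real.pi/3 := by
        refine Real.injOn_cos hmem ⟨by positivity, by nlinarith [Real.pi_pos]⟩ ?_
        rw [Real.cos_pi_div_three]; push_cast at hcos'; linarith
      have := solve 6 (by norm_num) (by rw [this]; push_cast; ring)
      right; right; right; right; exact this
    · -- cos θ = 1 = cos 0, contradiction
      exfalso
      have : θ = 0 := by
        refine Real.injOn_cos hmem ⟨le_refl 0, Real.pi_pos.le⟩ ?_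
        rw [Real.cos_zero]; push_cast at hcos'; linarith
      linarith
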